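/- Let S be a unital star subalgebra of Matrix (Fin n) (Fin n) ℂ, and let N be the maximum, over all self-adjoint A ∈ S, of the cardinality of the spectrum of A (the number of distinct eigenvalues). Then the set {A ∈ S : A = Aᴴ and A has exactly N distinct eigenvalues} is dense in the set {A ∈ S : A = Aᴴ} of self-adjoint elements of S, with respect to the topology induced from Matrix (Fin n) (Fin n) ℂ. -/

import Mathlib

open Matrix
open Topology

variable {n : ℕ}

lemma conj_pow_unitary (U D : Matrix (Fin n) (Fin n) ℂ) (hU : U ∈ Matrix.unitaryGroup (Fin n) ℂ)
    (r : ℕ) : (U * D * star U) ^ r = U * D ^ r * star U := by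
  have h1 : star U * U = 1 := (Matrix.mem_unitaryGroup_iff').mp hU
  induction r with
  | zero => simpa using (mul_eq_one_comm.mp h1).symm
  | succ k ih =>
    rw [pow_succ, ih, pow_succ]
    calc U * D ^ k * star U * (U * D * star U)
        = U * D ^ k * (star U * U) * (D * star U) := by
          simp only [Matrix.mul_assoc]
      _ = U * (D ^ k * D) * star U := by rw [h1]; simp only [Matrix.mul_one, Matrix.mul_assoc]

lemma trace_pow_herm {M : Matrix (Fin n) (Fin n) ℂ} (hM : M.IsHermitian) (r : ℕ) :
    Matrix.trace (M ^ r) = ∑ i, ((hM.eigenvalues i : ℂ)) ^ r := by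
  have hU := (hM.eigenvectorUnitary).2
  conv_lhs => rw [hM.spectral_theorem, Unitary.conjStarAlgAut_apply]
  rw [conj_pow_unitary _ _ hU, Matrix.trace_mul_cycle,
    (Matrix.mem_unitaryGroup_iff').mp hU, one_mul, Matrix.diagonal_pow, Matrix.trace_diagonal]
  simp

lemma spectrum_herm {M : Matrix (Fin n) (Fin n) ℂ} (hM : M.IsHermitian) :
    spectrum ℂ M = Set.range (fun i => (hM.eigenvalues i : ℂ)) := by
  conv_lhs => rw [hM.spectral_theorem, Unitary.conjStarAlgAut_apply]
  set u : (Matrix (Fin n) (Fin n) ℂ)ˣ := Unitary.toUnits hM.eigenvectorUnitary with hu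
  have : (hM.eigenvectorUnitary : Matrix (Fin n) (Fin n) ℂ) * diagonal (RCLike.ofReal ∘ hM.eigenvalues) * (star (hM.eigenvectorUnitary : Matrix (Fin n) (Fin n) ℂ))
      = (u : Matrix (Fin n) (Fin n) ℂ) * diagonal (RCLike.ofReal ∘ hM.eigenvalues) * ((u⁻¹ : (Matrix (Fin n) (Fin n) ℂ)ˣ) : Matrix (Fin n) (Fin n) ℂ) := rfl
  rw [this, spectrum.units_conjugate, spectrum_diagonal]
  rfl

variable {n N : ℕ}

noncomputable def hankelM (μ : Fin n → ℝ) (N : ℕ) : Matrix (Fin N) (Fin N) ℝ :=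
  Matrix.of fun j k => ∑ i, μ i ^ ((j : ℕ) + (k : ℕ))

lemma hankel_eq (μ : Fin n → ℝ) (N : ℕ) :
    hankelM μ N = (Matrix.of fun (j : Fin N) (i : Fin n) => μ i ^ (j : ℕ)) *
      (Matrix.of fun (j : Fin N) (i : Fin n) => μ i ^ (j : ℕ))ᵀ := by
  ext j k
  simp [hankelM, Matrix.mul_apply, pow_add]

lemma hankel_det_ne_zero (μ : Fin n → ℝ) (h : N ≤ (Finset.univ.image μ).card) :
    (hankelM μ N).det ≠ 0 := by
  classical
  obtain ⟨t, hts, htc⟩ := Finset.exists_subset_card_eq h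
  let e : t ≃ Fin N := t.equivFinOfCardEq htc
  have hmem : ∀ v : t, ∃ i, μ i = (v : ℝ) := by
    intro v
    have := hts v.2
    simpa using Finset.mem_image.mp this
  choose f hf using hmem
  set g : Fin N → Fin n := fun k => f (e.symm k) with hg
  have hinj : Function.Injective (μ ∘ g) := by
    intro a b hab
    simp only [Function.comp, hg, hf] at hab
    exact e.symm.injective (Subtype.ext hab)
  set V : Matrix (Fin N) (Fin n) ℝ := Matrix.of fun j i => μ i ^ (j : ℕ) with hV
  set V' : Matrix (Fin N) (Fin N) ℝ := (Matrix.vandermonde (μ ∘ g))ᵀ with hV'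
  have hdet' : V'.det ≠ 0 := by
    rw [hV', Matrix.det_transpose, Matrix.det_vandermonde]
    refine Finset.prod_ne_zero_iff.mpr fun i _ => Finset.prod_ne_zero_iff.mpr fun j hj => ?_
    have hij : i < j := Finset.mem_Ioi.mp hj
    exact sub_ne_zero.mpr fun hc => absurd (hinj hc) hij.ne'
  rw [hankel_eq]
  intro hdet
  obtain ⟨x, hx0, hx⟩ := (Matrix.exists_mulVec_eq_zero_iff).mpr hdet
  have key : (x ᵥ* V) ⬝ᵥ (x ᵥ* V) = 0 := by
    have h1 : x ⬝ᵥ ((V * Vᵀ) *ᵥ x) = 0 := by rw [hx, dotProduct_zero]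
    calc (x ᵥ* V) ⬝ᵥ (x ᵥ* V) = (x ᵥ* V) ⬝ᵥ (Vᵀ *ᵥ x) := by rw [Matrix.mulVec_transpose]
      _ = x ⬝ᵥ (V *ᵥ (Vᵀ *ᵥ x)) := (Matrix.dotProduct_mulVec x V _).symm
      _ = x ⬝ᵥ ((V * Vᵀ) *ᵥ x) := by rw [Matrix.mulVec_mulVec]
      _ = 0 := h1
  have hxV : x ᵥ* V = 0 := by
    funext i
    have hnn : ∀ i ∈ Finset.univ, 0 ≤ (x ᵥ* V) i * (x ᵥ* V) i := fun i _ => mul_self_nonneg _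
    have := (Finset.sum_eq_zero_iff_of_nonneg hnn).mp key i (Finset.mem_univ i)
    exact mul_self_eq_zero.mp this
  have hxV' : x ᵥ* V' = 0 := by
    funext k
    have : (x ᵥ* V) (g k) = 0 := by rw [hxV]; rfl
    simpa [hV, hV', Matrix.vecMul, dotProduct, Matrix.vandermonde] using this
  have : x = 0 := by
    have hu : IsUnit V' := (Matrix.isUnit_iff_isUnit_det V').mpr (isUnit_iff_ne_zero.mpr hdet')
    have := Matrix.vecMul_injective_iff_isUnit.mpr hu
    apply this
    show x ᵥ* V' = 0 ᵥ* V'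
    rw [hxV', Matrix.zero_vecMul]
  exact hx0 this

lemma hankel_det_ne_zero_iff' (μ : Fin n → ℝ) (h : (hankelM μ N).det ≠ 0) :
    N ≤ (Finset.univ.image μ).card := by
  classical
  by_contra hlt
  push_neg at hlt
  set s := Finset.univ.image μ with hs
  set W : Matrix (Fin N) s ℝ := Matrix.of fun j v => (v : ℝ) ^ (j : ℕ) with hW
  set E : Matrix s (Fin n) ℝ := Matrix.of fun v i => if μ i = (v : ℝ) then 1 else 0 with hE
  have hfac : (Matrix.of fun (j : Fin N) (i : Fin n) => μ i ^ (j : ℕ)) = W * E := by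
    ext j i
    rw [Matrix.mul_apply]
    have hmem : μ i ∈ s := Finset.mem_image_of_mem μ (Finset.mem_univ i)
    rw [Finset.sum_eq_single (⟨μ i, hmem⟩ : s)]
    · simp [hW, hE]
    · intro b _ hb
      have : μ i ≠ (b : ℝ) := fun hc => hb (by ext; exact hc.symm) |>.elim
      simp [hW, hE, this]
    · intro hb; exact absurd (Finset.mem_univ _) hb
  have hrank : (hankelM μ N).rank ≤ s.card := by
    rw [hankel_eq, hfac]
    calc (W * E * (W * E)ᵀ).rank ≤ (W * E).rank := Matrix.rank_mul_le_left _ _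
      _ ≤ W.rank := Matrix.rank_mul_le_left _ _
      _ ≤ Fintype.card s := Matrix.rank_le_card_width W
      _ = s.card := Fintype.card_coe s
  have hu : IsUnit (hankelM μ N) := (Matrix.isUnit_iff_isUnit_det _).mpr (isUnit_iff_ne_zero.mpr h)
  have := Matrix.rank_of_isUnit _ hu
  rw [this, Fintype.card_fin] at hrank
  exact absurd (hrank.trans_lt hlt) (lt_irrefl N)

lemma ncard_spectrum {M : Matrix (Fin n) (Fin n) ℂ} (hM : M.IsHermitian) :
    (spectrum ℂ M).ncard = (Finset.univ.image hM.eigenvalues).card := by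
  rw [spectrum_herm hM]
  have h1 : Set.range (fun i => (hM.eigenvalues i : ℂ))
      = Complex.ofReal '' Set.range hM.eigenvalues := by
    rw [← Set.range_comp]; rfl
  have h2 : Set.range hM.eigenvalues = ↑(Finset.univ.image hM.eigenvalues) := by simp
  rw [h1, Set.ncard_image_of_injective _ Complex.ofReal_injective, h2, Set.ncard_coe_finset]

lemma det_hankelC {M : Matrix (Fin n) (Fin n) ℂ} (hM : M.IsHermitian) (N : ℕ) :
    (Matrix.of fun j k : Fin N => Matrix.trace (M ^ ((j : ℕ) + (k : ℕ)))).det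
      = ((hankelM hM.eigenvalues N).det : ℂ) := by
  have h : (Matrix.of fun j k : Fin N => Matrix.trace (M ^ ((j : ℕ) + (k : ℕ))))
      = (hankelM hM.eigenvalues N).map Complex.ofRealHom := by
    ext j k
    simp only [Matrix.of_apply, Matrix.map_apply, hankelM, trace_pow_herm hM]
    rw [map_sum Complex.ofRealHom]
    simp
  rw [h]
  have := (RingHom.map_det Complex.ofRealHom (hankelM hM.eigenvalues N)).symm
  rw [RingHom.mapMatrix_apply] at this
  rw [this]
  rfl

/-- Generic elements (self-adjoint elements with the maximum possible number N
of distinct eigenvalues) are dense in the set of self-adjoint elements of a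
matrix *-algebra S, in the topology induced from the matrix space. -/
theorem generic_elements_dense (n : ℕ)
    (S : StarSubalgebra ℂ (Matrix (Fin n) (Fin n) ℂ))
    (N : ℕ)
    (hN : IsGreatest {c : ℕ | ∃ A ∈ S, A = Aᴴ ∧ (spectrum ℂ A).ncard = c} N) :
    {A : Matrix (Fin n) (Fin n) ℂ | A ∈ S ∧ A = Aᴴ} ⊆
      closure {A : Matrix (Fin n) (Fin n) ℂ |
        A ∈ S ∧ A = Aᴴ ∧ (spectrum ℂ A).ncard = N} := by
  classical
  intro A hA
  obtain ⟨hAS, hAH⟩ := hA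
  obtain ⟨B, hBS, hBH, hBcard⟩ := hN.1
  set Cm : Matrix (Fin n) (Fin n) ℂ := B - A with hCm
  have hMt : ∀ t : ℝ, (A + (t : ℂ) • Cm).IsHermitian := by
    intro t
    show _ = _
    rw [Matrix.conjTranspose_add, Matrix.conjTranspose_smul, hCm,
      Matrix.conjTranspose_sub, ← hAH, ← hBH, Complex.star_def, Complex.conj_ofReal]
  have hMS : ∀ t : ℝ, (A + (t : ℂ) • Cm) ∈ S :=
    fun t => S.add_mem hAS (S.smul_mem (S.sub_mem hBS hAS) _)
  set Mp : Matrix (Fin n) (Fin n) (Polynomial ℂ) :=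
    A.map Polynomial.C + (Polynomial.X : Polynomial ℂ) • Cm.map Polynomial.C with hMp
  set P : Polynomial ℂ :=
    (Matrix.of fun j k : Fin N => Matrix.trace (Mp ^ ((j : ℕ) + (k : ℕ)))).det with hP
  have hPeval : ∀ z : ℂ, P.eval z =
      (Matrix.of fun j k : Fin N =>
        Matrix.trace ((A + z • Cm) ^ ((j : ℕ) + (k : ℕ)))).det := by
    intro z
    have hmap : (Polynomial.evalRingHom z).mapMatrix Mp = A + z • Cm := by
      ext i j
      simp only [hMp, Matrix.add_apply, Matrix.smul_apply, Matrix.map_apply, smul_eq_mul,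
        RingHom.mapMatrix_apply, _root_.map_add, _root_.map_mul, Polynomial.eval_C, Polynomial.eval_X,
        Polynomial.coe_evalRingHom, Polynomial.eval_add, Polynomial.eval_mul]
    have h0 : P.eval z = (Polynomial.evalRingHom z) P := rfl
    rw [h0, hP, RingHom.map_det]
    congr 1
    ext j k
    show (Polynomial.evalRingHom z) (Matrix.trace (Mp ^ ((j : ℕ) + (k : ℕ)))) = _
    calc (Polynomial.evalRingHom z) (Matrix.trace (Mp ^ ((j : ℕ) + (k : ℕ))))
        = Matrix.trace ((Polynomial.evalRingHom z).mapMatrix (Mp ^ ((j : ℕ) + (k : ℕ)))) := by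
          simp [Matrix.trace, Matrix.diag, map_sum]
      _ = Matrix.trace (((Polynomial.evalRingHom z).mapMatrix Mp) ^ ((j : ℕ) + (k : ℕ))) := by
          rw [map_pow]
      _ = (Matrix.of fun j' k' : Fin N =>
            Matrix.trace ((A + z • Cm) ^ ((j' : ℕ) + (k' : ℕ)))) j k := by rw [hmap]; rfl
  have hBherm : B.IsHermitian := hBH.symm
  have hP1 : P.eval 1 ≠ 0 := by
    rw [hPeval 1]
    have e1 : A + (1 : ℂ) • Cm = B := by rw [one_smul, hCm]; abel
    rw [e1, det_hankelC hBherm N]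
    simp only [ne_eq, Complex.ofReal_eq_zero]
    apply hankel_det_ne_zero
    rw [← ncard_spectrum hBherm, hBcard]
  have hPne : P ≠ 0 := fun h => hP1 (by rw [h, Polynomial.eval_zero])
  have hZfin : {t : ℝ | P.eval (t : ℂ) = 0}.Finite := by
    have hsub : {t : ℝ | P.eval (t : ℂ) = 0} ⊆ Complex.ofReal ⁻¹' {z : ℂ | P.IsRoot z} :=
      fun t ht => ht
    refine Set.Finite.subset ?_ hsub
    exact Set.Finite.preimage Complex.ofReal_injective.injOn (Polynomial.finite_setOf_isRoot hPne)
  have htend : Filter.Tendsto (fun t : ℝ => A + (t : ℂ) • Cm) (𝓝[≠] (0 : ℝ)) (𝓝 A) := by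
    have hc : Continuous (fun t : ℝ => A + (t : ℂ) • Cm) :=
      continuous_const.add (Complex.continuous_ofReal.smul continuous_const)
    have h2 : Filter.Tendsto (fun t : ℝ => A + (t : ℂ) • Cm) (𝓝[≠] (0 : ℝ))
        (𝓝 (A + ((0 : ℝ) : ℂ) • Cm)) :=
      (hc.tendsto 0).mono_left (nhdsWithin_le_nhds (s := {(0:ℝ)}ᶜ))
    simpa using h2
  have hev : ∀ᶠ t : ℝ in 𝓝[≠] (0 : ℝ), (A + (t : ℂ) • Cm) ∈
      {A : Matrix (Fin n) (Fin n) ℂ | A ∈ S ∧ A = Aᴴ ∧ (spectrum ℂ A).ncard = N} := by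
    have h1 : ∀ᶠ t : ℝ in 𝓝[≠] (0 : ℝ), P.eval (t : ℂ) ≠ 0 := by
      have hfin : ({t : ℝ | P.eval (t : ℂ) = 0} \ {0}).Finite := hZfin.diff
      have hcl : IsClosed ({t : ℝ | P.eval (t : ℂ) = 0} \ {0}) := hfin.isClosed
      have h0 : (0 : ℝ) ∈ ({t : ℝ | P.eval (t : ℂ) = 0} \ {0})ᶜ := fun h => h.2 rfl
      have hop : ∀ᶠ t in 𝓝 (0 : ℝ), t ∈ ({t : ℝ | P.eval (t : ℂ) = 0} \ {0})ᶜ :=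
        hcl.isOpen_compl.eventually_mem h0
      have hx := hop.filter_mono (nhdsWithin_le_nhds (s := {(0:ℝ)}ᶜ))
      have hne0 : ∀ᶠ t in 𝓝[≠] (0 : ℝ), t ≠ (0 : ℝ) := eventually_mem_nhdsWithin
      filter_upwards [hx, hne0] with t hmem htne
      intro hc
      exact hmem ⟨hc, htne⟩
    filter_upwards [h1] with t ht
    refine ⟨hMS t, (hMt t).symm, ?_⟩
    have herm := hMt t
    have hge : N ≤ (spectrum ℂ (A + (t : ℂ) • Cm)).ncard := by
      rw [ncard_spectrum herm]
      apply hankel_det_ne_zero_iff'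
      intro hc
      apply ht
      rw [hPeval (t : ℂ), det_hankelC herm N, hc, Complex.ofReal_zero]
    have hle : (spectrum ℂ (A + (t : ℂ) • Cm)).ncard ≤ N :=
      hN.2 ⟨_, hMS t, (hMt t).symm, rfl⟩
    exact le_antisymm hle hge
  exact mem_closure_of_tendsto htend hev
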